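/- Antipode identity: for every levelled forest f with n = ‖f‖ ≥ 1, one has Σ_{p=0}^{n} (−1)^p Σ_{s ∈ Sh(p, n−p)} s·((c_p·f_-^p) # f_+^p) = 0 and Σ_{p=0}^{n} (−1)^{n−p} Σ_{s ∈ Sh(p, n−p)} s·(f_-^p # (c_{n−p}·f_+^p)) = 0 in ℂLF; that is, the map S(f) = (−1)^{‖f‖} c_{‖f‖}·f is a two-sided antipode for the bialgebra (ℂLF, ∇, Δ). -/

import Mathlib

/-- The free complex vector space on the set of levelled forests, encoded as lists of the
blocks of the one-line word of the underlying permutation. -/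
abbrev CLF : Type := (List (List ℕ)) →₀ ℂ

/-- `B` encodes a genuine levelled forest: a nonempty list of blocks whose concatenation
is a permutation word of `{1,…,n}`, `n = ‖f‖`. -/
def IsLF (B : List (List ℕ)) : Prop :=
  B ≠ [] ∧ List.Perm B.flatten (List.range' 1 B.flatten.length)

/-- `η ∈ S_N` is an `(a, N-a)`-shuffle. -/
def IsShuffle {N : ℕ} (a : ℕ) (η : Equiv.Perm (Fin N)) : Prop :=
  ∀ i j : Fin N, i < j → ((j : ℕ) < a ∨ a ≤ (i : ℕ)) → η i < η j

instance {N a : ℕ} : DecidablePred (fun η : Equiv.Perm (Fin N) => IsShuffle a η) :=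
  fun η => by unfold IsShuffle; infer_instance

/-- The finite set `Sh(a, N-a)` of `(a, N-a)`-shuffles inside `S_N`. -/
def shuffles (N a : ℕ) : Finset (Equiv.Perm (Fin N)) :=
  Finset.univ.filter (fun η => IsShuffle a η)

/-- The action of `α ∈ S_N` on a (one-based) letter. -/
def relabel {N : ℕ} (α : Equiv.Perm (Fin N)) (ℓ : ℕ) : ℕ :=
  if h : ℓ - 1 < N then (α ⟨ℓ - 1, h⟩ : ℕ) + 1 else ℓ

/-- The left action `α · (σ, c) = (α∘σ, c)` of a permutation on a levelled forest word. -/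
def relabelF {N : ℕ} (α : Equiv.Perm (Fin N)) (B : List (List ℕ)) : List (List ℕ) :=
  B.map (List.map (relabel α))

/-- Shift all letters of a forest word by `n`. -/
def shiftF (n : ℕ) (B : List (List ℕ)) : List (List ℕ) :=
  B.map (List.map (· + n))

/-- The lower part `f_-^p` of the horizontal splitting at level `p`. -/
def lowerW (p : ℕ) (B : List (List ℕ)) : List (List ℕ) :=
  B.map (List.filter (fun a => decide (a ≤ p)))

/-- Split a block at its letters `≤ p` (removed letters acting as separators, empty
segments kept), subtracting `p` from the remaining letters. -/
def splitUpper (p : ℕ) : List ℕ → List (List ℕ)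
  | [] => [[]]
  | a :: l =>
    if a ≤ p then [] :: splitUpper p l
    else
      match splitUpper p l with
      | [] => [[a - p]]
      | s :: rest => ((a - p) :: s) :: rest

/-- The upper part `f_+^p` of the horizontal splitting at level `p`. -/
def upperW (p : ℕ) (B : List (List ℕ)) : List (List ℕ) :=
  (B.map (splitUpper p)).flatten

/-- Interleave the letters of a block of `f` with the blocks of `g` on its leaves. -/
def interleave : List ℕ → List (List ℕ) → List ℕ
  | [], ws => ws.flatten
  | a :: as, [] => a :: interleave as []
  | a :: as, w :: ws => w ++ a :: interleave as ws

/-- Graft the blocks `ws` of (the shifted) `g` onto the successive trees of `f`. -/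
def graftAux : List (List ℕ) → List (List ℕ) → List (List ℕ)
  | [], _ => []
  | blk :: rest, ws =>
    interleave blk (ws.take (blk.length + 1)) :: graftAux rest (ws.drop (blk.length + 1))

/-- The horizontal grafting `f # g` of levelled forests (`nt(g) = |f|`). -/
def graftW (F G : List (List ℕ)) : List (List ℕ) :=
  graftAux F (shiftF F.flatten.length G)


/-- `γ_p`: reverse the first `min p n` positions of `Fin n`. -/
def gamF (n p : ℕ) (i : Fin n) : Fin n :=
  if h : (i : ℕ) < min p n then ⟨min p n - 1 - i, by omega⟩ else i

lemma gamF_invol (n p : ℕ) : Function.Involutive (gamF n p) := by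
  intro i
  unfold gamF
  by_cases h : (i : ℕ) < min p n
  · rw [dif_pos h]
    have h2 : (min p n - 1 - (i : ℕ)) < min p n := by omega
    rw [dif_pos h2]
    exact Fin.ext (by simp only [Fin.val_mk]; omega)
  · rw [dif_neg h, dif_neg h]

def gam (n p : ℕ) : Equiv.Perm (Fin n) :=
  Function.Involutive.toPerm (gamF n p) (gamF_invol n p)

lemma gam_apply (n p : ℕ) (i : Fin n) : gam n p i = gamF n p i := rfl

lemma gam_val (n p : ℕ) (hp : p ≤ n) (i : Fin n) :
    (gam n p i : ℕ) = if (i : ℕ) < p then p - 1 - i else i := by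
  rw [gam_apply]
  unfold gamF
  by_cases h : (i : ℕ) < min p n
  · rw [dif_pos h]; simp only [if_pos (by omega : (i:ℕ) < p), Fin.val_mk]; omega
  · rw [dif_neg h]; rw [if_neg (by omega)]

lemma gam_gam (n p : ℕ) (i : Fin n) : gam n p (gam n p i) = i := gamF_invol n p i

lemma gam_sq (n p : ℕ) : gam n p * gam n p = 1 := by
  ext i
  simp [Equiv.Perm.mul_apply, gam_gam]

/-- `δ_p`: reverse the positions from `min p n` to `n-1` of `Fin n`. -/
def delF (n p : ℕ) (i : Fin n) : Fin n :=
  if h : min p n ≤ (i : ℕ) then ⟨n + min p n - 1 - i, by have := i.isLt; omega⟩ else i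

lemma delF_invol (n p : ℕ) : Function.Involutive (delF n p) := by
  intro i
  have hi := i.isLt
  unfold delF
  by_cases h : min p n ≤ (i : ℕ)
  · rw [dif_pos h]
    have h2 : min p n ≤ n + min p n - 1 - (i : ℕ) := by omega
    rw [dif_pos h2]
    exact Fin.ext (by simp only [Fin.val_mk]; omega)
  · rw [dif_neg h, dif_neg h]

def del (n p : ℕ) : Equiv.Perm (Fin n) :=
  Function.Involutive.toPerm (delF n p) (delF_invol n p)

lemma del_apply (n p : ℕ) (i : Fin n) : del n p i = delF n p i := rfl

lemma del_val (n p : ℕ) (hp : p ≤ n) (i : Fin n) :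
    (del n p i : ℕ) = if p ≤ (i : ℕ) then n + p - 1 - i else i := by
  rw [del_apply]
  unfold delF
  by_cases h : min p n ≤ (i : ℕ)
  · rw [dif_pos h]; rw [if_pos (by omega)]; simp only [Fin.val_mk]; omega
  · rw [dif_neg h]; rw [if_neg (by omega)]

lemma del_del (n p : ℕ) (i : Fin n) : del n p (del n p i) = i := delF_invol n p i

lemma del_sq (n p : ℕ) : del n p * del n p = 1 := by
  ext i
  simp [Equiv.Perm.mul_apply, del_del]
/-- decreasing on `[0,p)`, increasing on `[p,n)` -/
def DecW (n p : ℕ) (w : Fin n → Fin n) : Prop :=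
  (∀ i j : Fin n, i < j → (j : ℕ) < p → w j < w i) ∧
  (∀ i j : Fin n, i < j → p ≤ (i : ℕ) → w i < w j)

/-- increasing on `[0,p)`, decreasing on `[p,n)` -/
def IncW (n p : ℕ) (w : Fin n → Fin n) : Prop :=
  (∀ i j : Fin n, i < j → (j : ℕ) < p → w i < w j) ∧
  (∀ i j : Fin n, i < j → p ≤ (i : ℕ) → w j < w i)

lemma isShuffle_iff_gam (n p : ℕ) (hp : p ≤ n) (η : Equiv.Perm (Fin n)) :
    IsShuffle p η ↔ DecW n p (fun i => η (gam n p i)) := by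
  constructor
  · intro hs
    constructor
    · intro i j hij hj
      have hij' : (i : ℕ) < (j : ℕ) := hij
      apply hs (gam n p j) (gam n p i)
      · rw [Fin.lt_def, gam_val n p hp, gam_val n p hp,
          if_pos (by omega : (j:ℕ) < p), if_pos (by omega : (i:ℕ) < p)]
        omega
      · left; rw [gam_val n p hp, if_pos (by omega : (i:ℕ) < p)]; omega
    · intro i j hij hi
      have hij' : (i : ℕ) < (j : ℕ) := hij
      apply hs (gam n p i) (gam n p j)
      · rw [Fin.lt_def, gam_val n p hp, gam_val n p hp,
          if_neg (by omega : ¬ (i:ℕ) < p), if_neg (by omega : ¬ (j:ℕ) < p)]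
        omega
      · right; rw [gam_val n p hp, if_neg (by omega : ¬ (i:ℕ) < p)]; omega
  · intro hd
    intro i j hij hcase
    have hij' : (i : ℕ) < (j : ℕ) := hij
    rcases hcase with hj | hi
    · have h1 : gam n p j < gam n p i := by
        rw [Fin.lt_def, gam_val n p hp, gam_val n p hp,
          if_pos (by omega : (j:ℕ) < p), if_pos (by omega : (i:ℕ) < p)]
        omega
      have h2 : (gam n p i : ℕ) < p := by
        rw [gam_val n p hp, if_pos (by omega : (i:ℕ) < p)]; omega
      have := hd.1 (gam n p j) (gam n p i) h1 h2
      simpa [gam_gam] using this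
    · have h1 : gam n p i < gam n p j := by
        rw [Fin.lt_def, gam_val n p hp, gam_val n p hp,
          if_neg (by omega : ¬ (i:ℕ) < p), if_neg (by omega : ¬ (j:ℕ) < p)]
        omega
      have h2 : p ≤ (gam n p i : ℕ) := by
        rw [gam_val n p hp, if_neg (by omega : ¬ (i:ℕ) < p)]; omega
      have := hd.2 (gam n p i) (gam n p j) h1 h2
      simpa [gam_gam] using this

lemma isShuffle_iff_del (n p : ℕ) (hp : p ≤ n) (η : Equiv.Perm (Fin n)) :
    IsShuffle p η ↔ IncW n p (fun i => η (del n p i)) := by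
  constructor
  · intro hs
    constructor
    · intro i j hij hj
      have hij' : (i : ℕ) < (j : ℕ) := hij
      apply hs (del n p i) (del n p j)
      · rw [Fin.lt_def, del_val n p hp, del_val n p hp,
          if_neg (by omega : ¬ p ≤ (i:ℕ)), if_neg (by omega : ¬ p ≤ (j:ℕ))]
        omega
      · left; rw [del_val n p hp, if_neg (by omega : ¬ p ≤ (j:ℕ))]; omega
    · intro i j hij hi
      have hij' : (i : ℕ) < (j : ℕ) := hij
      have hj := j.isLt
      apply hs (del n p j) (del n p i)
      · rw [Fin.lt_def, del_val n p hp, del_val n p hp,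
          if_pos (by omega : p ≤ (j:ℕ)), if_pos (by omega : p ≤ (i:ℕ))]
        omega
      · right; rw [del_val n p hp, if_pos (by omega : p ≤ (j:ℕ))]
        have := i.isLt; omega
  · intro hd
    intro i j hij hcase
    have hij' : (i : ℕ) < (j : ℕ) := hij
    have hj := j.isLt
    rcases hcase with hjp | hip
    · have h1 : del n p i < del n p j := by
        rw [Fin.lt_def, del_val n p hp, del_val n p hp,
          if_neg (by omega : ¬ p ≤ (i:ℕ)), if_neg (by omega : ¬ p ≤ (j:ℕ))]
        omega
      have h2 : (del n p j : ℕ) < p := by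
        rw [del_val n p hp, if_neg (by omega : ¬ p ≤ (j:ℕ))]; omega
      have := hd.1 (del n p i) (del n p j) h1 h2
      simpa [del_del] using this
    · have h1 : del n p j < del n p i := by
        rw [Fin.lt_def, del_val n p hp, del_val n p hp,
          if_pos (by omega : p ≤ (j:ℕ)), if_pos (by omega : p ≤ (i:ℕ))]
        omega
      have h2 : p ≤ (del n p j : ℕ) := by
        rw [del_val n p hp, if_pos (by omega : p ≤ (j:ℕ))]; omega
      have := hd.2 (del n p j) (del n p i) h1 h2
      simpa [del_del] using this
lemma decW_up (n p : ℕ) (hpn : p < n) (w : Fin n → Fin n)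
    (hw : 0 < p → w ⟨p, hpn⟩ < w ⟨p - 1, by omega⟩)
    (hd : DecW n p w) : DecW n (p + 1) w := by
  constructor
  · intro i j hij hj
    have hij' : (i : ℕ) < (j : ℕ) := hij
    by_cases h : (j : ℕ) < p
    · exact hd.1 i j hij h
    · have hjp : (j : ℕ) = p := by omega
      have hp0 : 0 < p := by omega
      have hjeq : j = ⟨p, hpn⟩ := Fin.ext hjp
      have key := hw hp0
      rw [← hjeq] at key
      by_cases hi : (i : ℕ) = p - 1
      · have hieq : i = (⟨p - 1, by omega⟩ : Fin n) := Fin.ext hi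
        rw [hieq]; exact key
      · refine lt_trans key (hd.1 i ⟨p - 1, by omega⟩ ?_ ?_)
        · rw [Fin.lt_def]; simp only [Fin.val_mk]; omega
        · simp only [Fin.val_mk]; omega
  · intro i j hij hi
    exact hd.2 i j hij (by omega)

lemma decW_down (n p : ℕ) (hp1 : 1 ≤ p) (hpn : p ≤ n) (w : Fin n → Fin n)
    (hw : ∀ h : p < n, w ⟨p - 1, by omega⟩ < w ⟨p, h⟩)
    (hd : DecW n p w) : DecW n (p - 1) w := by
  constructor
  · intro i j hij hj; exact hd.1 i j hij (by omega)
  · intro i j hij hi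
    have hij' : (i : ℕ) < (j : ℕ) := hij
    by_cases h : p ≤ (i : ℕ)
    · exact hd.2 i j hij h
    · have hieq : (i : ℕ) = p - 1 := by omega
      have hpn' : p < n := by have := j.isLt; omega
      have key : w i < w ⟨p, hpn'⟩ := by
        have : i = (⟨p - 1, by omega⟩ : Fin n) := Fin.ext hieq
        rw [this]; exact hw hpn'
      by_cases hj : (j : ℕ) = p
      · have : j = (⟨p, hpn'⟩ : Fin n) := Fin.ext hj
        rw [this]; exact key
      · refine lt_trans key (hd.2 ⟨p, hpn'⟩ j ?_ ?_)
        · rw [Fin.lt_def]; simp only [Fin.val_mk]; omega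
        · simp only [Fin.val_mk]; omega

lemma incW_up (n p : ℕ) (hpn : p < n) (w : Fin n → Fin n)
    (hw : 0 < p → w ⟨p - 1, by omega⟩ < w ⟨p, hpn⟩)
    (hd : IncW n p w) : IncW n (p + 1) w := by
  constructor
  · intro i j hij hj
    have hij' : (i : ℕ) < (j : ℕ) := hij
    by_cases h : (j : ℕ) < p
    · exact hd.1 i j hij h
    · have hjp : (j : ℕ) = p := by omega
      have hp0 : 0 < p := by omega
      have hjeq : j = ⟨p, hpn⟩ := Fin.ext hjp
      have key := hw hp0
      rw [← hjeq] at key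
      by_cases hi : (i : ℕ) = p - 1
      · have hieq : i = (⟨p - 1, by omega⟩ : Fin n) := Fin.ext hi
        rw [hieq]; exact key
      · refine lt_trans (hd.1 i ⟨p - 1, by omega⟩ ?_ ?_) key
        · rw [Fin.lt_def]; simp only [Fin.val_mk]; omega
        · simp only [Fin.val_mk]; omega
  · intro i j hij hi
    exact hd.2 i j hij (by omega)

lemma incW_down (n p : ℕ) (hp1 : 1 ≤ p) (hpn : p ≤ n) (w : Fin n → Fin n)
    (hw : ∀ h : p < n, w ⟨p, h⟩ < w ⟨p - 1, by omega⟩)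
    (hd : IncW n p w) : IncW n (p - 1) w := by
  constructor
  · intro i j hij hj; exact hd.1 i j hij (by omega)
  · intro i j hij hi
    have hij' : (i : ℕ) < (j : ℕ) := hij
    by_cases h : p ≤ (i : ℕ)
    · exact hd.2 i j hij h
    · have hieq : (i : ℕ) = p - 1 := by omega
      have hpn' : p < n := by have := j.isLt; omega
      have key : w ⟨p, hpn'⟩ < w i := by
        have : i = (⟨p - 1, by omega⟩ : Fin n) := Fin.ext hieq
        rw [this]; exact hw hpn'
      by_cases hj : (j : ℕ) = p
      · have : j = (⟨p, hpn'⟩ : Fin n) := Fin.ext hj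
        rw [this]; exact key
      · refine lt_trans (hd.2 ⟨p, hpn'⟩ j ?_ ?_) key
        · rw [Fin.lt_def]; simp only [Fin.val_mk]; omega
        · simp only [Fin.val_mk]; omega
lemma mem_shuffles {n p : ℕ} {η : Equiv.Perm (Fin n)} :
    η ∈ shuffles n p ↔ IsShuffle p η := by
  simp [shuffles]

/-- value of the word `η ∘ γ_p` at a natural position -/
def wv (n p : ℕ) (η : Equiv.Perm (Fin n)) (k : ℕ) : ℕ :=
  if h : k < n then (η (gam n p ⟨k, h⟩) : ℕ) else 0

def goUp1 (n p : ℕ) (η : Equiv.Perm (Fin n)) : Prop :=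
  p < n ∧ (p = 0 ∨ wv n p η p < wv n p η (p - 1))

instance (n p : ℕ) (η : Equiv.Perm (Fin n)) : Decidable (goUp1 n p η) := by
  unfold goUp1; infer_instance

def partner1 (n : ℕ) (x : Σ _ : ℕ, Equiv.Perm (Fin n)) : Σ _ : ℕ, Equiv.Perm (Fin n) :=
  if goUp1 n x.1 x.2 then ⟨x.1 + 1, x.2 * gam n x.1 * gam n (x.1 + 1)⟩
  else ⟨x.1 - 1, x.2 * gam n x.1 * gam n (x.1 - 1)⟩

lemma partner1_spec (n : ℕ) (hn : 1 ≤ n) (p : ℕ) (η : Equiv.Perm (Fin n))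
    (hp : p ≤ n) (hs : IsShuffle p η) :
    (partner1 n ⟨p, η⟩).1 ≤ n ∧
    IsShuffle (partner1 n ⟨p, η⟩).1 (partner1 n ⟨p, η⟩).2 ∧
    ((partner1 n ⟨p, η⟩).1 = p + 1 ∨ ((partner1 n ⟨p, η⟩).1 = p - 1 ∧ 1 ≤ p)) ∧
    ((fun i => (partner1 n ⟨p, η⟩).2 (gam n (partner1 n ⟨p, η⟩).1 i))
        = (fun i => η (gam n p i))) ∧
    partner1 n (partner1 n ⟨p, η⟩) = ⟨p, η⟩ := by
  set w : Fin n → Fin n := fun i => η (gam n p i) with hw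
  have hd : DecW n p w := (isShuffle_iff_gam n p hp η).mp hs
  have hL1 : ¬ goUp1 n p η → 1 ≤ p := by
    intro hg
    by_contra hc
    exact hg ⟨by omega, Or.inl (by omega)⟩
  by_cases hg : goUp1 n p η
  · -- go up
    have hpn : p < n := hg.1
    have hpart : partner1 n ⟨p, η⟩
        = ⟨p + 1, η * gam n p * gam n (p + 1)⟩ := by
      simp only [partner1, if_pos hg]
    set η' : Equiv.Perm (Fin n) := η * gam n p * gam n (p + 1) with hη'
    have comp : (fun i => η' (gam n (p + 1) i)) = w := by
      funext i
      simp only [hη', Equiv.Perm.mul_apply, gam_gam, hw]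
    have hwup : 0 < p → w ⟨p, hpn⟩ < w ⟨p - 1, by omega⟩ := by
      intro hp0
      rcases hg.2 with h0 | hlt
      · omega
      · rw [Fin.lt_def]
        have e1 : wv n p η p = (w ⟨p, hpn⟩ : ℕ) := dif_pos hpn
        have e2 : wv n p η (p - 1) = (w ⟨p - 1, by omega⟩ : ℕ) := dif_pos (by omega)
        omega
    have hd' : DecW n (p + 1) w := decW_up n p hpn w hwup hd
    have hs' : IsShuffle (p + 1) η' := by
      rw [isShuffle_iff_gam n (p + 1) (by omega) η', comp]
      exact hd'
    have hflip : ¬ goUp1 n (p + 1) η' := by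
      rintro ⟨h1, h2⟩
      rcases h2 with h0 | hlt
      · omega
      · rw [Nat.add_sub_cancel] at hlt
        have e1 : wv n (p + 1) η' (p + 1) = (w ⟨p + 1, h1⟩ : ℕ) := by
          rw [wv, dif_pos h1]
          exact congrArg Fin.val (congrFun comp ⟨p + 1, h1⟩)
        have e2 : wv n (p + 1) η' p = (w ⟨p, hpn⟩ : ℕ) := by
          rw [wv, dif_pos hpn]
          exact congrArg Fin.val (congrFun comp ⟨p, hpn⟩)
        have hmono : w ⟨p, hpn⟩ < w ⟨p + 1, h1⟩ := by
          refine hd.2 ⟨p, hpn⟩ ⟨p + 1, h1⟩ ?_ ?_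
          · rw [Fin.lt_def]; simp only [Fin.val_mk]; omega
          · simp only [Fin.val_mk]; omega
        rw [Fin.lt_def] at hmono
        omega
    have hinv : partner1 n (partner1 n ⟨p, η⟩) = ⟨p, η⟩ := by
      rw [hpart]
      simp only [partner1, if_neg hflip, Nat.add_sub_cancel]
      refine congrArg (Sigma.mk p) ?_
      ext i
      simp only [hη', Equiv.Perm.mul_apply, gam_gam]
    rw [hpart] at hinv ⊢
    exact ⟨(show p + 1 ≤ n by omega), hs', Or.inl rfl, comp, hinv⟩
  · -- go down
    have hp1 : 1 ≤ p := hL1 hg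
    have hpart : partner1 n ⟨p, η⟩
        = ⟨p - 1, η * gam n p * gam n (p - 1)⟩ := by
      simp only [partner1, if_neg hg]
    set η' : Equiv.Perm (Fin n) := η * gam n p * gam n (p - 1) with hη'
    have comp : (fun i => η' (gam n (p - 1) i)) = w := by
      funext i
      simp only [hη', Equiv.Perm.mul_apply, gam_gam, hw]
    have hwdown : ∀ h : p < n, w ⟨p - 1, by omega⟩ < w ⟨p, h⟩ := by
      intro hpn
      have h2 := not_or.mp (not_and.mp hg hpn)
      have hnlt : ¬ wv n p η p < wv n p η (p - 1) := h2.2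
      have e1 : wv n p η p = (w ⟨p, hpn⟩ : ℕ) := dif_pos hpn
      have e2 : wv n p η (p - 1) = (w ⟨p - 1, by omega⟩ : ℕ) := dif_pos (by omega)
      have hargne : gam n p ⟨p - 1, by omega⟩ ≠ gam n p ⟨p, hpn⟩ := by
        intro hEq
        have := congrArg Fin.val hEq
        rw [gam_val n p hp, gam_val n p hp] at this
        simp only [Fin.val_mk] at this
        rw [if_pos (by omega), if_neg (by omega)] at this
        omega
      have hne : w ⟨p - 1, by omega⟩ ≠ w ⟨p, hpn⟩ := by
        intro hEq
        exact hargne (η.injective hEq)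
      rw [Fin.lt_def]
      rw [Ne, Fin.ext_iff] at hne
      omega
    have hd' : DecW n (p - 1) w := decW_down n p hp1 hp w hwdown hd
    have hs' : IsShuffle (p - 1) η' := by
      rw [isShuffle_iff_gam n (p - 1) (by omega) η', comp]
      exact hd'
    have hflip : goUp1 n (p - 1) η' := by
      refine ⟨by omega, ?_⟩
      by_cases hp2 : p = 1
      · left; omega
      · right
        have hb1 : p - 1 < n := by omega
        have hb2 : p - 2 < n := by omega
        have e1 : wv n (p - 1) η' (p - 1) = (w ⟨p - 1, hb1⟩ : ℕ) := by
          rw [wv, dif_pos hb1]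
          exact congrArg Fin.val (congrFun comp ⟨p - 1, hb1⟩)
        have e2 : wv n (p - 1) η' (p - 1 - 1) = (w ⟨p - 2, hb2⟩ : ℕ) := by
          rw [wv]
          rw [dif_pos (by omega : p - 1 - 1 < n)]
          have := congrArg Fin.val (congrFun comp ⟨p - 1 - 1, by omega⟩)
          rw [this]
          exact congrArg Fin.val (congrArg w (Fin.ext (by simp only [Fin.val_mk]; omega)))
        have hmono : w ⟨p - 1, hb1⟩ < w ⟨p - 2, hb2⟩ := by
          refine hd.1 ⟨p - 2, hb2⟩ ⟨p - 1, hb1⟩ ?_ ?_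
          · rw [Fin.lt_def]; simp only [Fin.val_mk]; omega
          · simp only [Fin.val_mk]; omega
        rw [Fin.lt_def] at hmono
        omega
    have hinv : partner1 n (partner1 n ⟨p, η⟩) = ⟨p, η⟩ := by
      rw [hpart]
      simp only [partner1, if_pos hflip]
      have hpp : p - 1 + 1 = p := by omega
      rw [show (⟨p - 1 + 1, η' * gam n (p - 1) * gam n (p - 1 + 1)⟩ :
            Σ _ : ℕ, Equiv.Perm (Fin n))
          = ⟨p, η' * gam n (p - 1) * gam n p⟩ by rw [hpp]]
      refine congrArg (Sigma.mk p) ?_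
      ext i
      simp only [hη', Equiv.Perm.mul_apply, gam_gam]
    rw [hpart] at hinv ⊢
    exact ⟨(show p - 1 ≤ n by omega), hs', Or.inr ⟨rfl, hp1⟩, comp, hinv⟩

lemma cancel1 (n : ℕ) (hn : 1 ≤ n) (G : (Fin n → Fin n) → CLF) :
    ∑ p ∈ Finset.range (n + 1), ((-1 : ℂ) ^ p) •
      ∑ η ∈ shuffles n p, G (fun i => η (gam n p i)) = 0 := by
  simp only [Finset.smul_sum]
  rw [Finset.sum_sigma' (Finset.range (n + 1)) (fun p => shuffles n p)
    (fun p η => ((-1 : ℂ) ^ p) • G (fun i => η (gam n p i)))]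
  refine Finset.sum_involution (fun x _ => partner1 n x) ?_ ?_ ?_ ?_
  · rintro ⟨p, η⟩ hx
    beta_reduce
    have hp : p ≤ n := by
      have := (Finset.mem_sigma.mp hx).1
      simpa [Nat.lt_succ_iff] using Finset.mem_range.mp this
    have hs : IsShuffle p η := mem_shuffles.mp (Finset.mem_sigma.mp hx).2
    obtain ⟨h1, h2, h3, h4, h5⟩ := partner1_spec n hn p η hp hs
    rw [h4]
    have hsign : ((-1 : ℂ) ^ (partner1 n ⟨p, η⟩).1) = -((-1 : ℂ) ^ p) := by
      rcases h3 with h | ⟨h, hp1⟩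
      · rw [h, pow_succ]; ring
      · rw [h]
        conv_rhs => rw [show p = (p - 1) + 1 by omega]
        rw [pow_succ]
        ring
    rw [hsign, neg_smul, add_neg_cancel]
  · rintro ⟨p, η⟩ hx _
    beta_reduce
    have hp : p ≤ n := by
      have := (Finset.mem_sigma.mp hx).1
      simpa [Nat.lt_succ_iff] using Finset.mem_range.mp this
    have hs : IsShuffle p η := mem_shuffles.mp (Finset.mem_sigma.mp hx).2
    obtain ⟨h1, h2, h3, h4, h5⟩ := partner1_spec n hn p η hp hs
    intro hEq
    have := congrArg Sigma.fst hEq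
    simp only at this
    rcases h3 with h | ⟨h, hp1⟩ <;> omega
  · rintro ⟨p, η⟩ hx
    have hp : p ≤ n := by
      have := (Finset.mem_sigma.mp hx).1
      simpa [Nat.lt_succ_iff] using Finset.mem_range.mp this
    have hs : IsShuffle p η := mem_shuffles.mp (Finset.mem_sigma.mp hx).2
    obtain ⟨h1, h2, h3, h4, h5⟩ := partner1_spec n hn p η hp hs
    show partner1 n ⟨p, η⟩ ∈ (Finset.range (n + 1)).sigma (fun p => shuffles n p)
    refine Finset.mem_sigma.mpr ⟨Finset.mem_range.mpr (by omega), mem_shuffles.mpr h2⟩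
  · rintro ⟨p, η⟩ hx
    have hp : p ≤ n := by
      have := (Finset.mem_sigma.mp hx).1
      simpa [Nat.lt_succ_iff] using Finset.mem_range.mp this
    have hs : IsShuffle p η := mem_shuffles.mp (Finset.mem_sigma.mp hx).2
    exact (partner1_spec n hn p η hp hs).2.2.2.2
/-- value of the word `η ∘ δ_p` at a natural position -/
def wv2 (n p : ℕ) (η : Equiv.Perm (Fin n)) (k : ℕ) : ℕ :=
  if h : k < n then (η (del n p ⟨k, h⟩) : ℕ) else 0

def goUp2 (n p : ℕ) (η : Equiv.Perm (Fin n)) : Prop :=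
  p < n ∧ (p = 0 ∨ wv2 n p η (p - 1) < wv2 n p η p)

instance (n p : ℕ) (η : Equiv.Perm (Fin n)) : Decidable (goUp2 n p η) := by
  unfold goUp2; infer_instance

def partner2 (n : ℕ) (x : Σ _ : ℕ, Equiv.Perm (Fin n)) : Σ _ : ℕ, Equiv.Perm (Fin n) :=
  if goUp2 n x.1 x.2 then ⟨x.1 + 1, x.2 * del n x.1 * del n (x.1 + 1)⟩
  else ⟨x.1 - 1, x.2 * del n x.1 * del n (x.1 - 1)⟩

lemma partner2_spec (n : ℕ) (hn : 1 ≤ n) (p : ℕ) (η : Equiv.Perm (Fin n))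
    (hp : p ≤ n) (hs : IsShuffle p η) :
    (partner2 n ⟨p, η⟩).1 ≤ n ∧
    IsShuffle (partner2 n ⟨p, η⟩).1 (partner2 n ⟨p, η⟩).2 ∧
    ((partner2 n ⟨p, η⟩).1 = p + 1 ∨ ((partner2 n ⟨p, η⟩).1 = p - 1 ∧ 1 ≤ p)) ∧
    ((fun i => (partner2 n ⟨p, η⟩).2 (del n (partner2 n ⟨p, η⟩).1 i))
        = (fun i => η (del n p i))) ∧
    partner2 n (partner2 n ⟨p, η⟩) = ⟨p, η⟩ := by
  set w : Fin n → Fin n := fun i => η (del n p i) with hw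
  have hd : IncW n p w := (isShuffle_iff_del n p hp η).mp hs
  have hL1 : ¬ goUp2 n p η → 1 ≤ p := by
    intro hg
    by_contra hc
    exact hg ⟨by omega, Or.inl (by omega)⟩
  by_cases hg : goUp2 n p η
  · -- go up
    have hpn : p < n := hg.1
    have hpart : partner2 n ⟨p, η⟩
        = ⟨p + 1, η * del n p * del n (p + 1)⟩ := by
      simp only [partner2, if_pos hg]
    set η' : Equiv.Perm (Fin n) := η * del n p * del n (p + 1) with hη'
    have comp : (fun i => η' (del n (p + 1) i)) = w := by
      funext i
      simp only [hη', Equiv.Perm.mul_apply, del_del, hw]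
    have hwup : 0 < p → w ⟨p - 1, by omega⟩ < w ⟨p, hpn⟩ := by
      intro hp0
      rcases hg.2 with h0 | hlt
      · omega
      · rw [Fin.lt_def]
        have e1 : wv2 n p η p = (w ⟨p, hpn⟩ : ℕ) := dif_pos hpn
        have e2 : wv2 n p η (p - 1) = (w ⟨p - 1, by omega⟩ : ℕ) := dif_pos (by omega)
        omega
    have hd' : IncW n (p + 1) w := incW_up n p hpn w hwup hd
    have hs' : IsShuffle (p + 1) η' := by
      rw [isShuffle_iff_del n (p + 1) (by omega) η', comp]
      exact hd'
    have hflip : ¬ goUp2 n (p + 1) η' := by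
      rintro ⟨h1, h2⟩
      rcases h2 with h0 | hlt
      · omega
      · rw [Nat.add_sub_cancel] at hlt
        have e1 : wv2 n (p + 1) η' (p + 1) = (w ⟨p + 1, h1⟩ : ℕ) := by
          rw [wv2, dif_pos h1]
          exact congrArg Fin.val (congrFun comp ⟨p + 1, h1⟩)
        have e2 : wv2 n (p + 1) η' p = (w ⟨p, hpn⟩ : ℕ) := by
          rw [wv2, dif_pos hpn]
          exact congrArg Fin.val (congrFun comp ⟨p, hpn⟩)
        have hmono : w ⟨p + 1, h1⟩ < w ⟨p, hpn⟩ := by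
          refine hd.2 ⟨p, hpn⟩ ⟨p + 1, h1⟩ ?_ ?_
          · rw [Fin.lt_def]; simp only [Fin.val_mk]; omega
          · simp only [Fin.val_mk]; omega
        rw [Fin.lt_def] at hmono
        omega
    have hinv : partner2 n (partner2 n ⟨p, η⟩) = ⟨p, η⟩ := by
      rw [hpart]
      simp only [partner2, if_neg hflip, Nat.add_sub_cancel]
      refine congrArg (Sigma.mk p) ?_
      ext i
      simp only [hη', Equiv.Perm.mul_apply, del_del]
    rw [hpart] at hinv ⊢
    exact ⟨(show p + 1 ≤ n by omega), hs', Or.inl rfl, comp, hinv⟩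
  · -- go down
    have hp1 : 1 ≤ p := hL1 hg
    have hpart : partner2 n ⟨p, η⟩
        = ⟨p - 1, η * del n p * del n (p - 1)⟩ := by
      simp only [partner2, if_neg hg]
    set η' : Equiv.Perm (Fin n) := η * del n p * del n (p - 1) with hη'
    have comp : (fun i => η' (del n (p - 1) i)) = w := by
      funext i
      simp only [hη', Equiv.Perm.mul_apply, del_del, hw]
    have hwdown : ∀ h : p < n, w ⟨p, h⟩ < w ⟨p - 1, by omega⟩ := by
      intro hpn
      have h2 := not_or.mp (not_and.mp hg hpn)
      have hnlt : ¬ wv2 n p η (p - 1) < wv2 n p η p := h2.2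
      have e1 : wv2 n p η p = (w ⟨p, hpn⟩ : ℕ) := dif_pos hpn
      have e2 : wv2 n p η (p - 1) = (w ⟨p - 1, by omega⟩ : ℕ) := dif_pos (by omega)
      have hargne : del n p ⟨p - 1, by omega⟩ ≠ del n p ⟨p, hpn⟩ := by
        intro hEq
        have := congrArg Fin.val hEq
        rw [del_val n p hp, del_val n p hp] at this
        simp only [Fin.val_mk] at this
        rw [if_neg (by omega), if_pos (by omega)] at this
        omega
      have hne : w ⟨p - 1, by omega⟩ ≠ w ⟨p, hpn⟩ := by
        intro hEq
        exact hargne (η.injective hEq)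
      rw [Fin.lt_def]
      rw [Ne, Fin.ext_iff] at hne
      omega
    have hd' : IncW n (p - 1) w := incW_down n p hp1 hp w hwdown hd
    have hs' : IsShuffle (p - 1) η' := by
      rw [isShuffle_iff_del n (p - 1) (by omega) η', comp]
      exact hd'
    have hflip : goUp2 n (p - 1) η' := by
      refine ⟨by omega, ?_⟩
      by_cases hp2 : p = 1
      · left; omega
      · right
        have hb1 : p - 1 < n := by omega
        have hb2 : p - 2 < n := by omega
        have e1 : wv2 n (p - 1) η' (p - 1) = (w ⟨p - 1, hb1⟩ : ℕ) := by
          rw [wv2, dif_pos hb1]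
          exact congrArg Fin.val (congrFun comp ⟨p - 1, hb1⟩)
        have e2 : wv2 n (p - 1) η' (p - 1 - 1) = (w ⟨p - 2, hb2⟩ : ℕ) := by
          rw [wv2]
          rw [dif_pos (by omega : p - 1 - 1 < n)]
          have := congrArg Fin.val (congrFun comp ⟨p - 1 - 1, by omega⟩)
          rw [this]
          exact congrArg Fin.val (congrArg w (Fin.ext (by simp only [Fin.val_mk]; omega)))
        have hmono : w ⟨p - 2, hb2⟩ < w ⟨p - 1, hb1⟩ := by
          refine hd.1 ⟨p - 2, hb2⟩ ⟨p - 1, hb1⟩ ?_ ?_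
          · rw [Fin.lt_def]; simp only [Fin.val_mk]; omega
          · simp only [Fin.val_mk]; omega
        rw [Fin.lt_def] at hmono
        omega
    have hinv : partner2 n (partner2 n ⟨p, η⟩) = ⟨p, η⟩ := by
      rw [hpart]
      simp only [partner2, if_pos hflip]
      have hpp : p - 1 + 1 = p := by omega
      rw [show (⟨p - 1 + 1, η' * del n (p - 1) * del n (p - 1 + 1)⟩ :
            Σ _ : ℕ, Equiv.Perm (Fin n))
          = ⟨p, η' * del n (p - 1) * del n p⟩ by rw [hpp]]
      refine congrArg (Sigma.mk p) ?_
      ext i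
      simp only [hη', Equiv.Perm.mul_apply, del_del]
    rw [hpart] at hinv ⊢
    exact ⟨(show p - 1 ≤ n by omega), hs', Or.inr ⟨rfl, hp1⟩, comp, hinv⟩

lemma cancel2 (n : ℕ) (hn : 1 ≤ n) (G : (Fin n → Fin n) → CLF) :
    ∑ p ∈ Finset.range (n + 1), ((-1 : ℂ) ^ (n - p)) •
      ∑ η ∈ shuffles n p, G (fun i => η (del n p i)) = 0 := by
  simp only [Finset.smul_sum]
  rw [Finset.sum_sigma' (Finset.range (n + 1)) (fun p => shuffles n p)
    (fun p η => ((-1 : ℂ) ^ (n - p)) • G (fun i => η (del n p i)))]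
  refine Finset.sum_involution (fun x _ => partner2 n x) ?_ ?_ ?_ ?_
  · rintro ⟨p, η⟩ hx
    beta_reduce
    have hp : p ≤ n := by
      have := (Finset.mem_sigma.mp hx).1
      simpa [Nat.lt_succ_iff] using Finset.mem_range.mp this
    have hs : IsShuffle p η := mem_shuffles.mp (Finset.mem_sigma.mp hx).2
    obtain ⟨h1, h2, h3, h4, h5⟩ := partner2_spec n hn p η hp hs
    rw [h4]
    have hsign : ((-1 : ℂ) ^ (n - (partner2 n ⟨p, η⟩).1)) = -((-1 : ℂ) ^ (n - p)) := by
      rcases h3 with h | ⟨h, hp1⟩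
      · rw [h]
        have hle : p + 1 ≤ n := by rw [← h]; exact h1
        conv_rhs => rw [show n - p = (n - (p + 1)) + 1 by omega]
        rw [pow_succ]
        ring
      · rw [h]
        rw [show n - (p - 1) = (n - p) + 1 by omega]
        rw [pow_succ]
        ring
    rw [hsign, neg_smul, add_neg_cancel]
  · rintro ⟨p, η⟩ hx _
    beta_reduce
    have hp : p ≤ n := by
      have := (Finset.mem_sigma.mp hx).1
      simpa [Nat.lt_succ_iff] using Finset.mem_range.mp this
    have hs : IsShuffle p η := mem_shuffles.mp (Finset.mem_sigma.mp hx).2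
    obtain ⟨h1, h2, h3, h4, h5⟩ := partner2_spec n hn p η hp hs
    intro hEq
    have := congrArg Sigma.fst hEq
    simp only at this
    rcases h3 with h | ⟨h, hp1⟩ <;> omega
  · rintro ⟨p, η⟩ hx
    have hp : p ≤ n := by
      have := (Finset.mem_sigma.mp hx).1
      simpa [Nat.lt_succ_iff] using Finset.mem_range.mp this
    have hs : IsShuffle p η := mem_shuffles.mp (Finset.mem_sigma.mp hx).2
    obtain ⟨h1, h2, h3, h4, h5⟩ := partner2_spec n hn p η hp hs
    show partner2 n ⟨p, η⟩ ∈ (Finset.range (n + 1)).sigma (fun p => shuffles n p)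
    refine Finset.mem_sigma.mpr ⟨Finset.mem_range.mpr (by omega), mem_shuffles.mpr h2⟩
  · rintro ⟨p, η⟩ hx
    have hp : p ≤ n := by
      have := (Finset.mem_sigma.mp hx).1
      simpa [Nat.lt_succ_iff] using Finset.mem_range.mp this
    have hs : IsShuffle p η := mem_shuffles.mp (Finset.mem_sigma.mp hx).2
    exact (partner2_spec n hn p η hp hs).2.2.2.2
lemma interleave_cons (xs : List ℕ) (b : ℕ) (w : List ℕ) (ws : List (List ℕ)) :
    interleave xs ((b :: w) :: ws) = b :: interleave xs (w :: ws) := by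
  cases xs <;> simp [interleave]

lemma splitUpper_ne_nil (p : ℕ) (l : List ℕ) : splitUpper p l ≠ [] := by
  induction l with
  | nil => simp [splitUpper]
  | cons a t ih =>
    rw [splitUpper]
    split
    · simp
    · cases h : splitUpper p t with
      | nil => simp
      | cons s rest => simp

lemma splitUpper_length (p : ℕ) (l : List ℕ) :
    (splitUpper p l).length = (l.filter (fun a => decide (a ≤ p))).length + 1 := by
  induction l with
  | nil => simp [splitUpper]
  | cons a t ih =>
    by_cases h : a ≤ p
    · simp [splitUpper, h, ih]
    · cases hs : splitUpper p t with
      | nil => exact absurd hs (splitUpper_ne_nil p t)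
      | cons s rest =>
        rw [hs] at ih
        simp [splitUpper, h, hs]
        simp at ih
        omega

lemma block_graft (p : ℕ) (rl sh : ℕ → ℕ) (l : List ℕ) :
    interleave ((l.filter (fun a => decide (a ≤ p))).map rl)
        ((splitUpper p l).map (List.map sh))
      = l.map (fun a => if a ≤ p then rl a else sh (a - p)) := by
  induction l with
  | nil => simp [splitUpper, interleave]
  | cons a t ih =>
    by_cases h : a ≤ p
    · rw [List.filter_cons_of_pos (by simpa using h)]
      rw [show splitUpper p (a :: t) = [] :: splitUpper p t by rw [splitUpper, if_pos h]]
      rw [List.map_cons, List.map_cons, List.map_cons]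
      rw [show interleave (rl a :: (t.filter (fun a => decide (a ≤ p))).map rl)
            (List.map sh [] :: (splitUpper p t).map (List.map sh))
          = List.map sh [] ++ rl a :: interleave ((t.filter (fun a => decide (a ≤ p))).map rl)
              ((splitUpper p t).map (List.map sh)) from rfl]
      rw [ih]
      simp [h]
    · cases hs : splitUpper p t with
      | nil => exact absurd hs (splitUpper_ne_nil p t)
      | cons s rest =>
        rw [List.filter_cons_of_neg (by simpa using h)]
        rw [show splitUpper p (a :: t) = ((a - p) :: s) :: rest by
          rw [splitUpper, if_neg h, hs]]
        rw [List.map_cons, List.map_cons]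
        rw [interleave_cons]
        rw [← List.map_cons (f := List.map sh) (a := s) (l := rest), ← hs, ih]
        simp [h]

lemma graftAux_flatten (h : List ℕ → List ℕ) (piece : List ℕ → List (List ℕ))
    (hlen : ∀ l, (piece l).length = (h l).length + 1) (B : List (List ℕ)) :
    graftAux (B.map h) ((B.map piece).flatten)
      = B.map (fun l => interleave (h l) (piece l)) := by
  induction B with
  | nil => simp [graftAux]
  | cons l B ih =>
    simp only [List.map_cons, List.flatten_cons, graftAux]
    rw [List.take_left' (hlen l), List.drop_left' (hlen l), ih]
lemma filter_range'_le (n p : ℕ) (hp : p ≤ n) :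
    (List.range' 1 n).filter (fun a => decide (a ≤ p)) = List.range' 1 p := by
  have hsplit : List.range' 1 p ++ List.range' (1 + p) (n - p) = List.range' 1 n := by
    have h2 := List.range'_append (s := 1) (m := p) (n := n - p) (step := 1)
    rw [one_mul] at h2
    rw [show p + (n - p) = n by omega] at h2
    exact h2
  rw [← hsplit, List.filter_append]
  have h1 : (List.range' 1 p).filter (fun a => decide (a ≤ p)) = List.range' 1 p :=
    List.filter_eq_self.mpr (fun a ha => by
      have := List.mem_range'_1.mp ha
      simpa using (by omega : a ≤ p))
  have h2 : (List.range' (1 + p) (n - p)).filter (fun a => decide (a ≤ p)) = [] :=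
    List.filter_eq_nil_iff.mpr (fun a ha => by
      have := List.mem_range'_1.mp ha
      simpa using (by omega : ¬ a ≤ p))
  rw [h1, h2, List.append_nil]

lemma lower_flatten_length (F : List (List ℕ)) (hF : IsLF F) (p : ℕ)
    (hp : p ≤ F.flatten.length) :
    (F.flatten.filter (fun a => decide (a ≤ p))).length = p := by
  have hperm := (hF.2).filter (fun a => decide (a ≤ p))
  rw [hperm.length_eq, filter_range'_le _ p hp]
  simp

lemma graftW_lower (p q : ℕ) {N : ℕ} (α : Equiv.Perm (Fin N)) (F : List (List ℕ))
    (hq : (F.flatten.filter (fun a => decide (a ≤ p))).length = q) :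
    graftW (relabelF α (lowerW p F)) (upperW p F)
      = F.map (List.map (fun a => if a ≤ p then relabel α a else (a - p) + q)) := by
  unfold graftW
  have hA : relabelF α (lowerW p F)
      = F.map (fun l => (l.filter (fun a => decide (a ≤ p))).map (relabel α)) := by
    rw [relabelF, lowerW, List.map_map]
    rfl
  have hA' : F.map (fun l => (l.filter (fun a => decide (a ≤ p))).map (relabel α))
      = (F.map (List.filter (fun a => decide (a ≤ p)))).map (List.map (relabel α)) := by
    rw [List.map_map]
    rfl
  have hlenA : (relabelF α (lowerW p F)).flatten.length = q := by
    rw [hA, hA', ← List.map_flatten, List.length_map, ← List.filter_flatten]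
    exact hq
  have hG : shiftF (relabelF α (lowerW p F)).flatten.length (upperW p F)
      = (F.map (fun l => (splitUpper p l).map (List.map (· + q)))).flatten := by
    rw [hlenA, shiftF, upperW, List.map_flatten, List.map_map]
    rfl
  rw [hG, hA]
  rw [graftAux_flatten (fun l => (l.filter (fun a => decide (a ≤ p))).map (relabel α))
      (fun l => (splitUpper p l).map (List.map (· + q)))
      (fun l => by rw [List.length_map, List.length_map, splitUpper_length])]
  refine List.map_congr_left (fun l _ => ?_)
  exact block_graft p (relabel α) (· + q) l

lemma graftW_upper (p q : ℕ) {N : ℕ} (β : Equiv.Perm (Fin N)) (F : List (List ℕ))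
    (hq : (F.flatten.filter (fun a => decide (a ≤ p))).length = q) :
    graftW (lowerW p F) (relabelF β (upperW p F))
      = F.map (List.map (fun a => if a ≤ p then a else relabel β (a - p) + q)) := by
  unfold graftW
  have hlenA : (lowerW p F).flatten.length = q := by
    rw [lowerW, ← List.filter_flatten]
    exact hq
  have hG : shiftF (lowerW p F).flatten.length (relabelF β (upperW p F))
      = (F.map (fun l => (splitUpper p l).map (List.map (fun b => relabel β b + q)))).flatten := by
    rw [hlenA, shiftF, relabelF, upperW, List.map_flatten, List.map_flatten,
      List.map_map, List.map_map]
    congr 1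
    refine List.map_congr_left (fun l _ => ?_)
    simp [List.map_map]
  rw [hG, lowerW]
  rw [graftAux_flatten (List.filter (fun a => decide (a ≤ p)))
      (fun l => (splitUpper p l).map (List.map (fun b => relabel β b + q)))
      (fun l => by rw [List.length_map, splitUpper_length])]
  refine List.map_congr_left (fun l _ => ?_)
  have := block_graft p id (fun b => relabel β b + q) l
  rw [List.map_id] at this
  simpa using this
lemma letter1 (n p a : ℕ) (hp : p ≤ n) (ha : 1 ≤ a) (han : a ≤ n)
    (η : Equiv.Perm (Fin n)) :
    relabel η (if a ≤ p then relabel (Fin.revPerm : Equiv.Perm (Fin p)) a else a - p + p)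
      = (η (gam n p ⟨a - 1, by omega⟩) : ℕ) + 1 := by
  by_cases hap : a ≤ p
  · rw [if_pos hap]
    have h1 : a - 1 < p := by omega
    have hrev : relabel (Fin.revPerm : Equiv.Perm (Fin p)) a = (p - a) + 1 := by
      rw [relabel, dif_pos h1]
      congr 1
      rw [Fin.revPerm_apply, Fin.val_rev]
      simp only [Fin.val_mk]
      omega
    rw [hrev, relabel, dif_pos (show p - a + 1 - 1 < n by omega)]
    have harg : (⟨p - a + 1 - 1, show p - a + 1 - 1 < n by omega⟩ : Fin n)
        = gam n p ⟨a - 1, by omega⟩ := by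
      refine Fin.ext ?_
      rw [gam_val n p hp]
      simp only [Fin.val_mk]
      rw [if_pos (by omega : a - 1 < p)]
      omega
    rw [harg]
  · rw [if_neg hap, show a - p + p = a by omega, relabel,
      dif_pos (show a - 1 < n by omega)]
    have harg : (⟨a - 1, show a - 1 < n by omega⟩ : Fin n)
        = gam n p ⟨a - 1, by omega⟩ := by
      refine Fin.ext ?_
      rw [gam_val n p hp]
      simp only [Fin.val_mk]
      rw [if_neg (by omega : ¬ a - 1 < p)]
    conv_lhs => rw [harg]

lemma letter2 (n p a : ℕ) (hp : p ≤ n) (ha : 1 ≤ a) (han : a ≤ n)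
    (η : Equiv.Perm (Fin n)) :
    relabel η (if a ≤ p then a
        else relabel (Fin.revPerm : Equiv.Perm (Fin (n - p))) (a - p) + p)
      = (η (del n p ⟨a - 1, by omega⟩) : ℕ) + 1 := by
  by_cases hap : a ≤ p
  · rw [if_pos hap, relabel, dif_pos (show a - 1 < n by omega)]
    have harg : (⟨a - 1, show a - 1 < n by omega⟩ : Fin n)
        = del n p ⟨a - 1, by omega⟩ := by
      refine Fin.ext ?_
      rw [del_val n p hp]
      simp only [Fin.val_mk]
      rw [if_neg (by omega : ¬ p ≤ a - 1)]
    conv_lhs => rw [harg]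
  · rw [if_neg hap]
    have h1 : a - p - 1 < n - p := by omega
    have hrev : relabel (Fin.revPerm : Equiv.Perm (Fin (n - p))) (a - p)
        = (n - a) + 1 := by
      rw [relabel, dif_pos h1]
      congr 1
      rw [Fin.revPerm_apply, Fin.val_rev]
      simp only [Fin.val_mk]
      omega
    rw [hrev, relabel, dif_pos (show n - a + 1 + p - 1 < n by omega)]
    have harg : (⟨n - a + 1 + p - 1, show n - a + 1 + p - 1 < n by omega⟩ : Fin n)
        = del n p ⟨a - 1, by omega⟩ := by
      refine Fin.ext ?_
      rw [del_val n p hp]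
      simp only [Fin.val_mk]
      rw [if_pos (by omega : p ≤ a - 1)]
      omega
    rw [harg]

lemma mapmap_congr (F : List (List ℕ)) (f g : ℕ → ℕ)
    (h : ∀ a ∈ F.flatten, f a = g a) :
    F.map (List.map f) = F.map (List.map g) :=
  List.map_congr_left (fun l hl =>
    List.map_congr_left (fun a ha => h a (List.mem_flatten.mpr ⟨l, hl, ha⟩)))
set_option maxHeartbeats 1000000 in
/-- antipode identity: for every levelled forest `f` with `n = ‖f‖ ≥ 1`,
`Σ_{p=0}^{n} (−1)^p Σ_{s ∈ Sh(p, n−p)} s·((c_p·f_-^p) # f_+^p) = 0` and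
`Σ_{p=0}^{n} (−1)^{n−p} Σ_{s ∈ Sh(p, n−p)} s·(f_-^p # (c_{n−p}·f_+^p)) = 0` in `ℂLF`;
that is, `S(f) = (−1)^{‖f‖} c_{‖f‖}·f` is a two-sided antipode for `(ℂLF, ∇, Δ)`.
(Here `c_p` is the order-reversing permutation `Fin.revPerm`.) -/
theorem antipode_identity (F : List (List ℕ)) (hF : IsLF F)
    (hn : 1 ≤ F.flatten.length) :
    (∑ p ∈ Finset.range (F.flatten.length + 1), ((-1 : ℂ) ^ p) •
        ∑ η ∈ shuffles F.flatten.length p,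
          Finsupp.single (relabelF η
            (graftW (relabelF (Fin.revPerm : Equiv.Perm (Fin p)) (lowerW p F))
              (upperW p F))) (1 : ℂ)) = (0 : CLF) ∧
    (∑ p ∈ Finset.range (F.flatten.length + 1),
        ((-1 : ℂ) ^ (F.flatten.length - p)) •
        ∑ η ∈ shuffles F.flatten.length p,
          Finsupp.single (relabelF η
            (graftW (lowerW p F)
              (relabelF (Fin.revPerm : Equiv.Perm (Fin (F.flatten.length - p)))
                (upperW p F)))) (1 : ℂ)) = (0 : CLF) := by
  set n := F.flatten.length with hndef
  have hletters : ∀ a ∈ F.flatten, 1 ≤ a ∧ a ≤ n := by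
    intro a ha
    have := List.mem_range'_1.mp (hF.2.mem_iff.mp ha)
    omega
  constructor
  · -- left antipode identity
    have hkey : ∀ p, p ≤ n → ∀ η : Equiv.Perm (Fin n),
        relabelF η (graftW (relabelF (Fin.revPerm : Equiv.Perm (Fin p)) (lowerW p F))
            (upperW p F))
          = F.map (List.map (fun a =>
              if h : a - 1 < n then ((η (gam n p ⟨a - 1, h⟩)) : ℕ) + 1 else a)) := by
      intro p hp η
      rw [graftW_lower p p _ F (lower_flatten_length F hF p hp)]
      simp only [relabelF, List.map_map]
      refine List.map_congr_left (fun l hl => ?_)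
      simp only [Function.comp_apply]
      rw [List.map_map]
      refine List.map_congr_left (fun a ha => ?_)
      have hb := hletters a (List.mem_flatten.mpr ⟨l, hl, ha⟩)
      simp only [Function.comp_apply]
      rw [dif_pos (by omega : a - 1 < n)]
      exact letter1 n p a hp hb.1 hb.2 η
    have hsum : (∑ p ∈ Finset.range (n + 1), ((-1 : ℂ) ^ p) •
        ∑ η ∈ shuffles n p,
          Finsupp.single (relabelF η
            (graftW (relabelF (Fin.revPerm : Equiv.Perm (Fin p)) (lowerW p F))
              (upperW p F))) (1 : ℂ))
        = ∑ p ∈ Finset.range (n + 1), ((-1 : ℂ) ^ p) •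
            ∑ η ∈ shuffles n p,
              (fun w : Fin n → Fin n => Finsupp.single (F.map (List.map (fun a =>
                if h : a - 1 < n then ((w ⟨a - 1, h⟩) : ℕ) + 1 else a))) (1 : ℂ))
                (fun i => η (gam n p i)) := by
      refine Finset.sum_congr rfl (fun p hp => ?_)
      have hp' : p ≤ n := by
        have := Finset.mem_range.mp hp; omega
      congr 1
      refine Finset.sum_congr rfl (fun η _ => ?_)
      rw [hkey p hp' η]
    rw [hsum]
    exact cancel1 n hn (fun w : Fin n → Fin n => Finsupp.single (F.map (List.map (fun a =>
      if h : a - 1 < n then ((w ⟨a - 1, h⟩) : ℕ) + 1 else a))) (1 : ℂ))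
  · -- right antipode identity
    have hkey : ∀ p, p ≤ n → ∀ η : Equiv.Perm (Fin n),
        relabelF η (graftW (lowerW p F)
            (relabelF (Fin.revPerm : Equiv.Perm (Fin (n - p))) (upperW p F)))
          = F.map (List.map (fun a =>
              if h : a - 1 < n then ((η (del n p ⟨a - 1, h⟩)) : ℕ) + 1 else a)) := by
      intro p hp η
      rw [graftW_upper p p _ F (lower_flatten_length F hF p hp)]
      simp only [relabelF, List.map_map]
      refine List.map_congr_left (fun l hl => ?_)
      simp only [Function.comp_apply]
      rw [List.map_map]
      refine List.map_congr_left (fun a ha => ?_)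
      have hb := hletters a (List.mem_flatten.mpr ⟨l, hl, ha⟩)
      simp only [Function.comp_apply]
      rw [dif_pos (by omega : a - 1 < n)]
      exact letter2 n p a hp hb.1 hb.2 η
    have hsum : (∑ p ∈ Finset.range (n + 1), ((-1 : ℂ) ^ (n - p)) •
        ∑ η ∈ shuffles n p,
          Finsupp.single (relabelF η
            (graftW (lowerW p F)
              (relabelF (Fin.revPerm : Equiv.Perm (Fin (n - p)))
                (upperW p F)))) (1 : ℂ))
        = ∑ p ∈ Finset.range (n + 1), ((-1 : ℂ) ^ (n - p)) •
            ∑ η ∈ shuffles n p,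
              (fun w : Fin n → Fin n => Finsupp.single (F.map (List.map (fun a =>
                if h : a - 1 < n then ((w ⟨a - 1, h⟩) : ℕ) + 1 else a))) (1 : ℂ))
                (fun i => η (del n p i)) := by
      refine Finset.sum_congr rfl (fun p hp => ?_)
      have hp' : p ≤ n := by
        have := Finset.mem_range.mp hp; omega
      congr 1
      refine Finset.sum_congr rfl (fun η _ => ?_)
      rw [hkey p hp' η]
    rw [hsum]
    exact cancel2 n hn (fun w : Fin n → Fin n => Finsupp.single (F.map (List.map (fun a =>
      if h : a - 1 < n then ((w ⟨a - 1, h⟩) : ℕ) + 1 else a))) (1 : ℂ))
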